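/- Let T be a triangulated category with a thick subcategory S admitting a t-structure (X, Y) (so in particular Hom(X, Y) = 0 and ΣX ⊆ X). Then for any object A of T with Hom(A, Y) = 0 and any object B of T with Hom(Σ⁻¹X, B) = 0, the canonical functor T → T/S induces a bijection Hom_T(A, B) → Hom_{T/S}(A, B). -/

import Mathlib

open CategoryTheory CategoryTheory.Limits CategoryTheory.Pretriangulated

universe v u

/-- Let `T` be a triangulated category with a thick (triangulated) subcategory `S`
admitting a t-structure `(X, Y)`: a torsion pair on `S` (`Hom(X, Y) = 0` and every
object of `S` is an extension of an object of `X` by an object of `Y`) with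
`ΣX ⊆ X`. Then for every `A` with `Hom(A, Y) = 0` and every `B` with
`Hom(Σ⁻¹X, B) = 0`, the canonical functor `T → T/S` to the Verdier quotient induces
a bijection `Hom_T(A, B) → Hom_{T/S}(A, B)`. -/
theorem statement5 {C : Type u} [Category.{v} C] [HasZeroObject C] [HasShift C ℤ]
    [Preadditive C] [∀ n : ℤ, (shiftFunctor C n).Additive] [Pretriangulated C]
    [IsTriangulated C]
    (S : ObjectProperty C) [S.IsTriangulated] (X Y : Set C)
    (hXS : ∀ x ∈ X, S x) (hYS : ∀ y ∈ Y, S y)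
    (hXY : ∀ x ∈ X, ∀ y ∈ Y, ∀ f : (x : C) ⟶ y, f = 0)
    (hshift : ∀ x ∈ X, x⟦(1 : ℤ)⟧ ∈ X)
    (hdec : ∀ s : C, S s → ∃ x ∈ X, ∃ y ∈ Y, ∃ (a : (x : C) ⟶ s) (b : s ⟶ y)
      (c : (y : C) ⟶ x⟦(1 : ℤ)⟧), Triangle.mk a b c ∈ distTriang C)
    (A B : C)
    (hA : ∀ y ∈ Y, ∀ f : A ⟶ (y : C), f = 0)
    (hB : ∀ x ∈ X, ∀ f : (x : C)⟦(-1 : ℤ)⟧ ⟶ B, f = 0) :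
    Function.Bijective (fun f : A ⟶ B => S.trW.Q.map f) := by
  -- Two auxiliary vanishing statements.
  have hxB : ∀ x ∈ X, ∀ f : (x : C) ⟶ B, f = 0 := by
    intro x hx f
    have h := hB (x⟦(1 : ℤ)⟧) (hshift x hx)
      ((shiftFunctorCompIsoId C (1 : ℤ) (-1 : ℤ) (by omega)).hom.app x ≫ f)
    calc f = (shiftFunctorCompIsoId C (1 : ℤ) (-1 : ℤ) (by omega)).inv.app x ≫
          ((shiftFunctorCompIsoId C (1 : ℤ) (-1 : ℤ) (by omega)).hom.app x ≫ f) := by simp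
      _ = 0 := by rw [h, comp_zero]
  have hxB1 : ∀ x ∈ X, ∀ f : (x : C) ⟶ B⟦(1 : ℤ)⟧, f = 0 := by
    intro x hx f
    have h := hB x hx ((shiftFunctor C (-1 : ℤ)).map f ≫
      (shiftFunctorCompIsoId C (1 : ℤ) (-1 : ℤ) (by omega)).hom.app B)
    have h' : (shiftFunctor C (-1 : ℤ)).map f = 0 := by
      have := congrArg (fun g => g ≫
        (shiftFunctorCompIsoId C (1 : ℤ) (-1 : ℤ) (by omega)).inv.app B) h
      simpa using this
    apply (shiftFunctor C (-1 : ℤ)).map_injective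
    rw [h', Functor.map_zero]
  constructor
  · -- injectivity
    intro f₁ f₂ h
    have h' : S.trW.Q.map f₁ = S.trW.Q.map f₂ := h
    rw [MorphismProperty.map_eq_iff_postcomp S.trW.Q S.trW] at h'
    obtain ⟨Z, s, hs, hfs⟩ := h'
    have hf0 : (f₁ - f₂) ≫ s = 0 := by rw [Preadditive.sub_comp, hfs, sub_self]
    rw [S.trW_iff] at hs
    obtain ⟨C', t, d, hT, hC'⟩ := hs
    have hT' := inv_rot_of_distTriang _ hT
    obtain ⟨g, hg⟩ := Triangle.coyoneda_exact₂ _ hT' (f₁ - f₂) hf0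
    obtain ⟨x, hx, y, hy, a, p, c, hT2⟩ := hdec (C'⟦(-1 : ℤ)⟧) (S.le_shift (-1 : ℤ) C' hC')
    have hae : a ≫ (Triangle.mk s t d).invRotate.mor₁ = 0 := hxB x hx _
    obtain ⟨e', he'⟩ := Triangle.yoneda_exact₂ _ hT2
      ((Triangle.mk s t d).invRotate.mor₁) hae
    have hgp : g ≫ (Triangle.mk a p c).mor₂ = 0 := hA y hy _
    have : f₁ - f₂ = 0 := by
      have h3 := congrArg (· ≫ e') hgp
      simp only [Category.assoc, zero_comp] at h3
      rw [hg, he']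
      exact (Category.assoc _ _ _).symm.trans h3
    rw [sub_eq_zero] at this
    exact this
  · -- surjectivity
    intro φ
    obtain ⟨lf, hlf⟩ := Localization.exists_leftFraction S.trW.Q S.trW φ
    have hs := lf.hs
    rw [S.trW_iff] at hs
    obtain ⟨C', t, d, hT, hC'⟩ := hs
    obtain ⟨x, hx, y, hy, a, p, c, hT2⟩ := hdec C' hC'
    have hu : (lf.f ≫ t) ≫ p = 0 := hA y hy _
    obtain ⟨u', hu'⟩ := Triangle.coyoneda_exact₂ _ hT2 (lf.f ≫ t) hu
    have had : a ≫ d = 0 := hxB1 x hx _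
    obtain ⟨b, hb⟩ := Triangle.coyoneda_exact₃ _ hT a had
    have hb' : a = b ≫ t := hb
    have hu'' : lf.f ≫ t = u' ≫ a := hu'
    have h2 : (lf.f - (u' ≫ b : A ⟶ lf.Y')) ≫ t = 0 := by
      rw [Preadditive.sub_comp]
      exact sub_eq_zero.2 (hu''.trans ((congrArg (u' ≫ ·) hb').trans (Category.assoc _ _ _).symm))
    obtain ⟨g, hgs⟩ := Triangle.coyoneda_exact₂ _ hT _ h2
    have hgs' : lf.f - (u' ≫ b : A ⟶ lf.Y') = g ≫ lf.s := hgs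
    obtain ⟨Z', r, c', hT3⟩ := distinguished_cocone_triangle b
    have hr : S.trW r := by rw [S.trW_iff']; exact ⟨x, b, c', hT3, hXS x hx⟩
    have hbr : b ≫ r = 0 := comp_distTriang_mor_zero₁₂ _ hT3
    refine ⟨g, ?_⟩
    haveI hinv := Localization.inverts S.trW.Q S.trW lf.s lf.hs
    simp only [hlf]
    rw [← cancel_mono (S.trW.Q.map lf.s), MorphismProperty.LeftFraction.map_comp_map_s]
    refine (S.trW.Q.map_comp (X := A) (Y := B) g lf.s).symm.trans ?_
    apply (MorphismProperty.map_eq_iff_postcomp S.trW.Q S.trW _ _).2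
    refine ⟨Z', r, hr, ?_⟩
    refine (congrArg (· ≫ r) hgs'.symm).trans ?_
    exact (Preadditive.sub_comp _ _ _).trans ((congrArg (lf.f ≫ r - ·) ((Category.assoc u' b r).trans
      ((congrArg (u' ≫ ·) hbr).trans comp_zero))).trans (sub_zero _))
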